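/- Let p ∈ [0,1], θ ∈ [0, π/2], φ ∈ ℝ, and let M = p·w w† + ((1−p)/4)·I₄ be the 4×4 matrix with w = cos θ·|00⟩ + sin θ·e^{−iφ}·|11⟩ ∈ ℂ⁴. Then the partial transpose M^{T₂} is positive semidefinite if and only if 2p·sin(2θ) ≤ 1 − p. In particular, for θ = π/4, M^{T₂} is positive semidefinite if and only if p ≤ 1/3. -/

import Mathlib

open Matrix BigOperators ComplexOrder

noncomputable section

/-- The rank-one matrix `x x†`. -/
def rankOne {n : Type*} (x : n → ℂ) : Matrix n n ℂ :=
  Matrix.of fun i j => x i * (starRingEnd ℂ) (x j)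

/-- Partial transpose on the second factor of a bipartite matrix. -/
def pt2 {a b : ℕ} (M : Matrix (Fin a × Fin b) (Fin a × Fin b) ℂ) :
    Matrix (Fin a × Fin b) (Fin a × Fin b) ℂ :=
  Matrix.of fun p q => M (p.1, q.2) (q.1, p.2)

lemma pt2_herm {a b : ℕ} {M : Matrix (Fin a × Fin b) (Fin a × Fin b) ℂ}
    (h : M.IsHermitian) : (pt2 M).IsHermitian := by
  ext ⟨i, j⟩ ⟨k, l⟩
  simpa [pt2, Matrix.conjTranspose_apply] using h.apply (i, l) (k, j)

lemma key_quadform (p θ φ : ℝ) (x : Fin 2 × Fin 2 → ℂ) :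
    dotProduct (star x) ((pt2 ((p : ℂ) • rankOne (fun y => if y = (0, 0) then (Real.cos θ : ℂ)
      else if y = (1, 1) then (Real.sin θ : ℂ) * Complex.exp (-(Complex.I * (φ : ℂ))) else 0)
      + (((1 - p) / 4 : ℝ) : ℂ) • 1)) *ᵥ x) =
    (((p * Real.cos θ ^ 2 + (1 - p) / 4) * Complex.normSq (x (0, 0))
     + (p * Real.sin θ ^ 2 + (1 - p) / 4) * Complex.normSq (x (1, 1))
     + ((1 - p) / 4 - p * Real.sin θ * Real.cos θ) * (Complex.normSq (x (0, 1)) + Complex.normSq (x (1, 0)))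
     + p * Real.sin θ * Real.cos θ * Complex.normSq (x (0, 1) + Complex.exp (Complex.I * φ) * x (1, 0)) : ℝ) : ℂ) := by
  have hconj : (starRingEnd ℂ) (Complex.exp (-(Complex.I * (φ : ℂ)))) = Complex.exp (Complex.I * φ) := by
    rw [← Complex.exp_conj]; congr 1; simp
  have hee : Complex.exp (Complex.I * φ) * Complex.exp (-(Complex.I * (φ : ℂ))) = 1 := by
    rw [← Complex.exp_add]; simp
  simp only [pt2, rankOne, Matrix.mulVec, dotProduct, Fintype.sum_prod_type, Fin.sum_univ_two,
    Matrix.add_apply, Matrix.smul_apply, Matrix.one_apply, Matrix.of_apply, Pi.star_apply,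
    smul_eq_mul, Prod.mk.injEq]
  norm_num [hconj]
  have hconj2 : (starRingEnd ℂ) (Complex.exp (Complex.I * φ)) = Complex.exp (-(Complex.I * (φ : ℂ))) := by
    rw [← Complex.exp_conj]; congr 1; simp
  push_cast [Complex.normSq_eq_conj_mul_self]
  simp only [map_add, _root_.map_mul, hconj, hconj2, ← Complex.ofReal_cos, ← Complex.ofReal_sin,
    Complex.conj_ofReal]
  linear_combination ((p : ℂ) * Real.sin θ * Real.sin θ * (starRingEnd ℂ) (x 1) * x 1
    - (p : ℂ) * Real.sin θ * Real.cos θ * (starRingEnd ℂ) (x (1, 0)) * x (1, 0)) * hee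

/-- For `M = p w w† + ((1-p)/4) I₄` with `w = cos θ |00⟩ + sin θ e^{-iφ} |11⟩`,
the partial transpose `M^{T₂}` is positive semidefinite iff `2 p sin(2θ) ≤ 1 - p`;
in particular for `θ = π/4` iff `p ≤ 1/3`. -/
theorem pt_noisy_bell_posSemidef_iff (p θ φ : ℝ)
    (hp0 : 0 ≤ p) (hp1 : p ≤ 1) (hθ0 : 0 ≤ θ) (hθ1 : θ ≤ Real.pi / 2)
    (w : Fin 2 × Fin 2 → ℂ)
    (hw : w = fun x => if x = (0, 0) then (Real.cos θ : ℂ)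
      else if x = (1, 1) then (Real.sin θ : ℂ) * Complex.exp (-(Complex.I * (φ : ℂ))) else 0)
    (M : Matrix (Fin 2 × Fin 2) (Fin 2 × Fin 2) ℂ)
    (hM : M = (p : ℂ) • rankOne w + (((1 - p) / 4 : ℝ) : ℂ) • 1) :
    ((pt2 M).PosSemidef ↔ 2 * p * Real.sin (2 * θ) ≤ 1 - p) ∧
    (θ = Real.pi / 4 → ((pt2 M).PosSemidef ↔ p ≤ 1 / 3)) := by
  subst hw hM
  have hherm : ((p : ℂ) • rankOne (fun x => if x = ((0 : Fin 2), (0 : Fin 2)) then (Real.cos θ : ℂ)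
      else if x = (1, 1) then (Real.sin θ : ℂ) * Complex.exp (-(Complex.I * (φ : ℂ))) else 0)
      + (((1 - p) / 4 : ℝ) : ℂ) • 1).IsHermitian := by
    unfold Matrix.IsHermitian
    ext i j
    simp only [Matrix.conjTranspose_apply, Matrix.add_apply, Matrix.smul_apply, rankOne,
      Matrix.of_apply, Matrix.one_apply, smul_eq_mul, star_add, star_mul', Complex.star_def,
      Complex.conj_conj, apply_ite (starRingEnd ℂ), map_zero, _root_.map_one, Complex.conj_ofReal]
    rw [show (if j = i then (1:ℂ) else 0) = if i = j then 1 else 0 by simp [eq_comm]]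
    ring
  have hpi := Real.pi_pos
  have hs : 0 ≤ Real.sin θ :=
    Real.sin_nonneg_of_nonneg_of_le_pi hθ0 (by linarith)
  have hc : 0 ≤ Real.cos θ :=
    Real.cos_nonneg_of_mem_Icc ⟨by linarith, hθ1⟩
  have hk : 0 ≤ p * Real.sin θ * Real.cos θ := by positivity
  have hsin2 : Real.sin (2 * θ) = 2 * Real.sin θ * Real.cos θ := Real.sin_two_mul θ
  have main : (pt2 ((p : ℂ) • rankOne (fun x => if x = ((0 : Fin 2), (0 : Fin 2)) then (Real.cos θ : ℂ)
      else if x = (1, 1) then (Real.sin θ : ℂ) * Complex.exp (-(Complex.I * (φ : ℂ))) else 0)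
      + (((1 - p) / 4 : ℝ) : ℂ) • 1)).PosSemidef ↔ 2 * p * Real.sin (2 * θ) ≤ 1 - p := by
    constructor
    · intro h
      have h2 := h.dotProduct_mulVec_nonneg (fun y => if y = ((0 : Fin 2), (1 : Fin 2)) then 1
        else if y = (1, 0) then -Complex.exp (-(Complex.I * (φ : ℂ))) else 0)
      rw [key_quadform] at h2
      have hee : Complex.exp (Complex.I * φ) * Complex.exp (-(Complex.I * (φ : ℂ))) = 1 := by
        rw [← Complex.exp_add]; simp
      have hns : Complex.normSq (-Complex.exp (-(Complex.I * (φ : ℂ)))) = 1 := by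
        simp [Complex.normSq_eq_norm_sq, Complex.norm_exp]
      simp only [show ((0,0) : Fin 2 × Fin 2) = ((0,1) : Fin 2 × Fin 2) ↔ False from by decide,
        show ((0,0) : Fin 2 × Fin 2) = ((1,0) : Fin 2 × Fin 2) ↔ False from by decide,
        show ((1,1) : Fin 2 × Fin 2) = ((0,1) : Fin 2 × Fin 2) ↔ False from by decide,
        show ((1,1) : Fin 2 × Fin 2) = ((1,0) : Fin 2 × Fin 2) ↔ False from by decide,
        show ((0,1) : Fin 2 × Fin 2) = ((0,1) : Fin 2 × Fin 2) ↔ True from by decide,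
        show ((1,0) : Fin 2 × Fin 2) = ((0,1) : Fin 2 × Fin 2) ↔ False from by decide,
        show ((1,0) : Fin 2 × Fin 2) = ((1,0) : Fin 2 × Fin 2) ↔ True from by decide,
        if_true, if_false, iff_false, iff_true] at h2
      rw [show (1 : ℂ) + Complex.exp (Complex.I * φ) * -Complex.exp (-(Complex.I * (φ:ℂ))) = 0 by
        rw [mul_neg, hee]; ring] at h2
      simp only [Complex.normSq_zero, Complex.normSq_one, hns] at h2
      rw [Complex.zero_le_real] at h2
      nlinarith [h2]
    · intro h
      refine PosSemidef.of_dotProduct_mulVec_nonneg (pt2_herm hherm) fun x => ?_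
      rw [key_quadform]
      rw [Complex.zero_le_real]
      have h1 := Complex.normSq_nonneg (x (0, 0))
      have h2 := Complex.normSq_nonneg (x (1, 1))
      have h3 := Complex.normSq_nonneg (x (0, 1))
      have h4 := Complex.normSq_nonneg (x (1, 0))
      have h5 := Complex.normSq_nonneg (x (0, 1) + Complex.exp (Complex.I * φ) * x (1, 0))
      have hqk : 0 ≤ (1 - p) / 4 - p * Real.sin θ * Real.cos θ := by nlinarith
      have hA : 0 ≤ p * Real.cos θ ^ 2 + (1 - p) / 4 := by
        have : 0 ≤ p * Real.cos θ ^ 2 := by positivity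
        linarith
      have hB : 0 ≤ p * Real.sin θ ^ 2 + (1 - p) / 4 := by
        have : 0 ≤ p * Real.sin θ ^ 2 := by positivity
        linarith
      exact add_nonneg (add_nonneg (add_nonneg (mul_nonneg hA h1) (mul_nonneg hB h2))
        (mul_nonneg hqk (add_nonneg h3 h4))) (mul_nonneg hk h5)
  refine ⟨main, fun hθ => ?_⟩
  rw [main, hθ]
  rw [show 2 * (Real.pi / 4) = Real.pi / 2 by ring, Real.sin_pi_div_two]
  constructor <;> intro <;> linarith
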